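/- arXiv:2103.11667 — 2 statements merged into one kernel-verified Lean document; each statement's English description precedes it below -/
import Mathlib

section
/- The variables U = √|Γ₁|(x₁x₂ + y₁y₂)/(sgn(Γ₁Γ₂)√(x₂²+y₂²)) and V = √|Γ₁|(x₂y₁ - x₁y₂)/(sgn(Γ₁Γ₂)√(x₂²+y₂²)) are canonical with respect to the Poisson bracket {zₖ, z̄ⱼ} = -(2i/Γₖ)δₖⱼ: one has {U,V} = sgn(Γ₁), {U,U} = {V,V} = 0. -/
open Real

lemma hd_const (C p q D v : ℝ) : HasDerivAt (fun s => C*(p*s+q)/D) (C*p/D) v := by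
  simpa using ((((hasDerivAt_id v).const_mul p).add_const q).const_mul C).div_const D

lemma hd_var (C K p q w v : ℝ) (h : 0 < v^2 + w^2) (hK : K ≠ 0) :
    HasDerivAt (fun s => C*(p*s+q)/(K * Real.sqrt (s^2+w^2)))
      ((C*p*(K*Real.sqrt (v^2+w^2)) - C*(p*v+q)*(K*(v/Real.sqrt (v^2+w^2))))/(K*Real.sqrt (v^2+w^2))^2) v := by
  have hs0 : Real.sqrt (v^2+w^2) ≠ 0 := ne_of_gt (Real.sqrt_pos.mpr h)
  have hnum : HasDerivAt (fun s => C*(p*s+q)) (C*p) v := by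
    simpa using (((hasDerivAt_id v).const_mul p).add_const q).const_mul C
  have harg : HasDerivAt (fun s : ℝ => s^2 + w^2) (2*v) v := by
    simpa using (hasDerivAt_pow 2 v).add_const (w^2)
  have hsqrt : HasDerivAt (fun s => Real.sqrt (s^2+w^2)) (v / Real.sqrt (v^2+w^2)) v := by
    have := (Real.hasDerivAt_sqrt (ne_of_gt h)).comp v harg
    refine this.congr_deriv ?_
    field_simp
  exact hnum.div (hsqrt.const_mul K) (mul_ne_zero hK hs0)

/-- The Poisson bracket corresponding to {z_k, conj z_j} = -(2i/Γ_k) δ_{kj},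
i.e. {x_k, y_k} = 1/Γ_k. -/
noncomputable def pbracket (Γ₁ Γ₂ : ℝ) (A B : ℝ → ℝ → ℝ → ℝ → ℝ)
    (x₁ y₁ x₂ y₂ : ℝ) : ℝ :=
  (1/Γ₁) * (deriv (fun s => A s y₁ x₂ y₂) x₁ * deriv (fun s => B x₁ s x₂ y₂) y₁
          - deriv (fun s => A x₁ s x₂ y₂) y₁ * deriv (fun s => B s y₁ x₂ y₂) x₁)
  + (1/Γ₂) * (deriv (fun s => A x₁ y₁ s y₂) x₂ * deriv (fun s => B x₁ y₁ x₂ s) y₂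
          - deriv (fun s => A x₁ y₁ x₂ s) y₂ * deriv (fun s => B x₁ y₁ s y₂) x₂)

/-- The variable U of the reduction. -/
noncomputable def Ured (Γ₁ Γ₂ : ℝ) (x₁ y₁ x₂ y₂ : ℝ) : ℝ :=
  Real.sqrt |Γ₁| * (x₁*x₂ + y₁*y₂) / (Real.sign (Γ₁*Γ₂) * Real.sqrt (x₂^2 + y₂^2))

/-- The variable V of the reduction. -/
noncomputable def Vred (Γ₁ Γ₂ : ℝ) (x₁ y₁ x₂ y₂ : ℝ) : ℝ :=
  Real.sqrt |Γ₁| * (x₂*y₁ - x₁*y₂) / (Real.sign (Γ₁*Γ₂) * Real.sqrt (x₂^2 + y₂^2))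

/-- The variables U, V are canonical: {U,V} = sgn Γ₁, {U,U} = {V,V} = 0
on the phase space (where z₂ ≠ 0). -/
theorem UV_canonical (Γ₁ Γ₂ : ℝ) (hΓ₁ : Γ₁ ≠ 0) (hΓ₂ : Γ₂ ≠ 0)
    (x₁ y₁ x₂ y₂ : ℝ)
    (h₁ : x₁^2 + y₁^2 < 1) (h₂ : x₂^2 + y₂^2 < 1)
    (hne : (x₁, y₁) ≠ (x₂, y₂)) (hz₂ : 0 < x₂^2 + y₂^2) :
    pbracket Γ₁ Γ₂ (Ured Γ₁ Γ₂) (Vred Γ₁ Γ₂) x₁ y₁ x₂ y₂ = Real.sign Γ₁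
    ∧ pbracket Γ₁ Γ₂ (Ured Γ₁ Γ₂) (Ured Γ₁ Γ₂) x₁ y₁ x₂ y₂ = 0
    ∧ pbracket Γ₁ Γ₂ (Vred Γ₁ Γ₂) (Vred Γ₁ Γ₂) x₁ y₁ x₂ y₂ = 0 := by
  refine ⟨?_, by rw [pbracket]; ring, by rw [pbracket]; ring⟩
  have hz₂' : 0 < y₂^2 + x₂^2 := by linarith
  have hsgn : Real.sign Γ₁ * Γ₁ = |Γ₁| := by
    rcases hΓ₁.lt_or_gt with h | h
    · rw [Real.sign_of_neg h, abs_of_neg h]; ring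
    · rw [Real.sign_of_pos h, abs_of_pos h]; ring
  have hK2 : (Real.sign (Γ₁*Γ₂))^2 = 1 := by
    rcases (mul_ne_zero hΓ₁ hΓ₂).lt_or_gt with h | h
    · rw [Real.sign_of_neg h]; ring
    · rw [Real.sign_of_pos h]; ring
  simp only [pbracket, Ured, Vred]
  set C := Real.sqrt |Γ₁| with hC_def
  set K := Real.sign (Γ₁*Γ₂) with hK_def
  set r := Real.sqrt (x₂^2 + y₂^2) with hr_def
  have hK0 : K ≠ 0 := by intro h; rw [h] at hK2; norm_num at hK2
  have hr0 : r ≠ 0 := ne_of_gt (Real.sqrt_pos.mpr hz₂)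
  have hr2 : r^2 = x₂^2 + y₂^2 := Real.sq_sqrt hz₂.le
  have hC2 : C^2 = |Γ₁| := Real.sq_sqrt (abs_nonneg _)
  have key : Real.sqrt (y₂^2 + x₂^2) = r := by rw [add_comm (y₂^2) (x₂^2), ← hr_def]
  have d1 : deriv (fun s => C*(s*x₂ + y₁*y₂)/(K*r)) x₁ = C*x₂/(K*r) := by
    rw [show (fun s => C*(s*x₂ + y₁*y₂)/(K*r)) = fun s => C*(x₂*s + y₁*y₂)/(K*r) by
      funext s; ring]
    exact (hd_const C x₂ (y₁*y₂) (K*r) x₁).deriv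
  have d2 : deriv (fun s => C*(x₁*x₂ + s*y₂)/(K*r)) y₁ = C*y₂/(K*r) := by
    rw [show (fun s => C*(x₁*x₂ + s*y₂)/(K*r)) = fun s => C*(y₂*s + x₁*x₂)/(K*r) by
      funext s; ring]
    exact (hd_const C y₂ (x₁*x₂) (K*r) y₁).deriv
  have d3 : deriv (fun s => C*(x₂*y₁ - s*y₂)/(K*r)) x₁ = C*(-y₂)/(K*r) := by
    rw [show (fun s => C*(x₂*y₁ - s*y₂)/(K*r)) = fun s => C*(-y₂*s + x₂*y₁)/(K*r) by
      funext s; ring]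
    exact (hd_const C (-y₂) (x₂*y₁) (K*r) x₁).deriv
  have d4 : deriv (fun s => C*(x₂*s - x₁*y₂)/(K*r)) y₁ = C*x₂/(K*r) := by
    rw [show (fun s => C*(x₂*s - x₁*y₂)/(K*r)) = fun s => C*(x₂*s + -(x₁*y₂))/(K*r) by
      funext s; ring]
    exact (hd_const C x₂ (-(x₁*y₂)) (K*r) y₁).deriv
  have d5 : deriv (fun s => C*(x₁*s + y₁*y₂)/(K*Real.sqrt (s^2+y₂^2))) x₂
      = (C*x₁*(K*r) - C*(x₁*x₂+y₁*y₂)*(K*(x₂/r)))/(K*r)^2 := by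
    have := (hd_var C K x₁ (y₁*y₂) y₂ x₂ hz₂ hK0).deriv
    rw [← hr_def] at this
    exact this
  have d6 : deriv (fun s => C*(x₁*x₂ + y₁*s)/(K*Real.sqrt (x₂^2+s^2))) y₂
      = (C*y₁*(K*r) - C*(y₁*y₂+x₁*x₂)*(K*(y₂/r)))/(K*r)^2 := by
    rw [show (fun s => C*(x₁*x₂ + y₁*s)/(K*Real.sqrt (x₂^2+s^2)))
        = fun s => C*(y₁*s + x₁*x₂)/(K*Real.sqrt (s^2+x₂^2)) by
      funext s; rw [add_comm (x₂^2) (s^2)]; ring_nf]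
    have := (hd_var C K y₁ (x₁*x₂) x₂ y₂ hz₂' hK0).deriv
    rw [key] at this
    exact this
  have d7 : deriv (fun s => C*(s*y₁ - x₁*y₂)/(K*Real.sqrt (s^2+y₂^2))) x₂
      = (C*y₁*(K*r) - C*(y₁*x₂+(-(x₁*y₂)))*(K*(x₂/r)))/(K*r)^2 := by
    rw [show (fun s => C*(s*y₁ - x₁*y₂)/(K*Real.sqrt (s^2+y₂^2)))
        = fun s => C*(y₁*s + -(x₁*y₂))/(K*Real.sqrt (s^2+y₂^2)) by
      funext s; ring_nf]
    have := (hd_var C K y₁ (-(x₁*y₂)) y₂ x₂ hz₂ hK0).deriv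
    rw [← hr_def] at this
    exact this
  have d8 : deriv (fun s => C*(x₂*y₁ - x₁*s)/(K*Real.sqrt (x₂^2+s^2))) y₂
      = (C*(-x₁)*(K*r) - C*((-x₁)*y₂+x₂*y₁)*(K*(y₂/r)))/(K*r)^2 := by
    rw [show (fun s => C*(x₂*y₁ - x₁*s)/(K*Real.sqrt (x₂^2+s^2)))
        = fun s => C*(-x₁*s + x₂*y₁)/(K*Real.sqrt (s^2+x₂^2)) by
      funext s; rw [add_comm (x₂^2) (s^2)]; ring_nf]
    have := (hd_var C K (-x₁) (x₂*y₁) x₂ y₂ hz₂' hK0).deriv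
    rw [key] at this
    exact this
  rw [d1, d2, d3, d4, d5, d6, d7, d8]
  rw [show Real.sign Γ₁ = |Γ₁|/Γ₁ by rw [← hsgn]; field_simp]
  rw [← hC2]
  field_simp
  linear_combination (-(C^2*r^2*Γ₁*(x₁^2+y₁^2)) - C^2*r^4*Γ₂) * hr2 + (-(C^2*r^6*Γ₂)) * hK2
end

section
/- Under the reduction substitution, the squared distance between the vortices expressed in reduced variables satisfies |z₁ - z₂|² = (u/√|Γ₁| · sgn Γ₁ - sgn Γ₂ · √(sgn(Γ₁Γ₂)[f sgn Γ₁ - (u²+v²)])/√|Γ₂|)² + v²/|Γ₁|, independent of the rotation angle α. -/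
open Real

/-- Under the reduction substitution, the squared distance between the vortices
equals (u sgn Γ₁/√|Γ₁| - sgn Γ₂ √(sgn(Γ₁Γ₂)[f sgn Γ₁ - (u²+v²)])/√|Γ₂|)² + v²/|Γ₁|,
independent of the rotation angle α. -/
theorem reduction_substitution_distance (Γ₁ Γ₂ f u v α : ℝ)
    (hΓ₁ : Γ₁ ≠ 0) (hΓ₂ : Γ₂ ≠ 0)
    (hrad : 0 ≤ Real.sign (Γ₁*Γ₂) * (f * Real.sign Γ₁ - (u^2 + v^2)))
    (x₁ y₁ x₂ y₂ : ℝ)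
    (hx₁ : x₁ = Real.sign (Γ₁*Γ₂) / Real.sqrt |Γ₁| * (u * Real.cos α - v * Real.sin α))
    (hy₁ : y₁ = Real.sign (Γ₁*Γ₂) / Real.sqrt |Γ₁| * (u * Real.sin α + v * Real.cos α))
    (hx₂ : x₂ = Real.cos α / Real.sqrt |Γ₂|
      * Real.sqrt (Real.sign (Γ₁*Γ₂) * (f * Real.sign Γ₁ - (u^2 + v^2))))
    (hy₂ : y₂ = Real.sin α / Real.sqrt |Γ₂|
      * Real.sqrt (Real.sign (Γ₁*Γ₂) * (f * Real.sign Γ₁ - (u^2 + v^2)))) :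
    (x₁ - x₂)^2 + (y₁ - y₂)^2
      = (u / Real.sqrt |Γ₁| * Real.sign Γ₁
          - Real.sign Γ₂ * Real.sqrt (Real.sign (Γ₁*Γ₂) * (f * Real.sign Γ₁ - (u^2 + v^2)))
              / Real.sqrt |Γ₂|)^2
        + v^2 / |Γ₁| := by
  subst hx₁ hy₁ hx₂ hy₂
  have ha : Real.sqrt |Γ₁| > 0 := Real.sqrt_pos.mpr (abs_pos.mpr hΓ₁)
  have hb : Real.sqrt |Γ₂| > 0 := Real.sqrt_pos.mpr (abs_pos.mpr hΓ₂)
  have ha2 : Real.sqrt |Γ₁| ^ 2 = |Γ₁| := Real.sq_sqrt (abs_nonneg _)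
  have hA : Real.sqrt (Real.sign (Γ₁*Γ₂) * (f * Real.sign Γ₁ - (u^2 + v^2))) ^ 2
      = Real.sign (Γ₁*Γ₂) * (f * Real.sign Γ₁ - (u^2 + v^2)) := Real.sq_sqrt hrad
  set A := Real.sqrt (Real.sign (Γ₁*Γ₂) * (f * Real.sign Γ₁ - (u^2 + v^2)))
  have htrig : Real.sin α ^ 2 + Real.cos α ^ 2 = 1 := Real.sin_sq_add_cos_sq α
  set a := Real.sqrt |Γ₁| with ha'
  rcases hΓ₁.lt_or_gt with h1 | h1 <;> rcases hΓ₂.lt_or_gt with h2 | h2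
  · rw [Real.sign_of_pos (mul_pos_of_neg_of_neg h1 h2), Real.sign_of_neg h1,
      Real.sign_of_neg h2]
    field_simp
    rw [← ha2]
    linear_combination (((u * Real.sqrt |Γ₂| - a * A)^2 + v^2 * (Real.sqrt |Γ₂|)^2)
      * a^2) * htrig
  · rw [Real.sign_of_neg (mul_neg_of_neg_of_pos h1 h2), Real.sign_of_neg h1,
      Real.sign_of_pos h2]
    field_simp
    rw [← ha2]
    linear_combination (((u * Real.sqrt |Γ₂| + a * A)^2 + v^2 * (Real.sqrt |Γ₂|)^2)
      * a^2) * htrig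
  · rw [Real.sign_of_neg (mul_neg_of_pos_of_neg h1 h2), Real.sign_of_pos h1,
      Real.sign_of_neg h2]
    field_simp
    rw [← ha2]
    linear_combination (((u * Real.sqrt |Γ₂| + a * A)^2 + v^2 * (Real.sqrt |Γ₂|)^2)
      * a^2) * htrig
  · rw [Real.sign_of_pos (mul_pos h1 h2), Real.sign_of_pos h1, Real.sign_of_pos h2]
    field_simp
    rw [← ha2]
    linear_combination (((u * Real.sqrt |Γ₂| - a * A)^2 + v^2 * (Real.sqrt |Γ₂|)^2)
      * a^2) * htrig
end
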